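/- Let M = (M_k) be a log-convex weight sequence, let A > 0, and let m, n ≥ 1 be integers. Then there exist constants B, C > 0 such that for every multi-index γ ∈ ℕⁿ ∖ {0}: Σ (α!/∏_δ k(δ)!) · A^{|α|} · M_{|α|} · ∏_δ M_{|δ|}^{|k(δ)|} ≤ B · C^{|γ|} · M_{|γ|}, where the sum ranges over all finitely supported functions k : ℕⁿ ∖ {0} → ℕᵐ satisfying Σ_δ |k(δ)|·δ = γ, where α := Σ_δ k(δ) ∈ ℕᵐ, α! = α₁!⋯α_m!, k(δ)! = k(δ)₁!⋯k(δ)_m!, and |·| denotes the sum of the entries of a multi-index. -/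

import Mathlib

/-- The size `|α|` of a multi-index: the sum of its entries. -/
def msize {d : ℕ} (α : Fin d → ℕ) : ℕ := ∑ i, α i

/-- The factorial `α!` of a multi-index: the product of the factorials of its entries. -/
def mfact {d : ℕ} (α : Fin d → ℕ) : ℕ := ∏ i, Nat.factorial (α i)

section helpers
variable {M : ℕ → ℝ}

lemma ratio_mono (hMpos : ∀ k, 0 < M k)
    (hlc : ∀ k : ℕ, 1 ≤ k → (M k) ^ 2 ≤ M (k - 1) * M (k + 1)) :
    Monotone (fun q => M (q + 1) / M q) := by
  apply monotone_nat_of_le_succ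
  intro q
  have h := hlc (q + 1) (by omega)
  simp only [Nat.add_sub_cancel] at h
  rw [div_le_div_iff₀ (hMpos q) (hMpos (q + 1))]
  nlinarith [hMpos q, hMpos (q + 1), hMpos (q + 2)]

lemma M_two_factor (hMpos : ∀ k, 0 < M k)
    (hlc : ∀ k : ℕ, 1 ≤ k → (M k) ^ 2 ≤ M (k - 1) * M (k + 1)) :
    ∀ b a, 1 ≤ a → M a * M (b + 1) ≤ M 1 * M (a + b) := by
  intro b
  induction b with
  | zero => intro a _; simp [mul_comm]
  | succ b ih =>
    intro a ha
    have hg : M (b + 1 + 1) / M (b + 1) ≤ M (a + b + 1) / M (a + b) :=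
      ratio_mono hMpos hlc (by omega)
    have h1 := hMpos (b + 1)
    have h2 := hMpos (a + b)
    have e1 : M (b + 1) * (M (b + 1 + 1) / M (b + 1)) = M (b + 1 + 1) := by
      field_simp
    have e2 : M (a + b) * (M (a + b + 1) / M (a + b)) = M (a + b + 1) := by
      field_simp
    have hab : a + (b + 1) = a + b + 1 := by ring
    calc M a * M (b + 2) = (M a * M (b + 1)) * (M (b + 1 + 1) / M (b + 1)) := by
          rw [mul_assoc, e1]
      _ ≤ (M 1 * M (a + b)) * (M (a + b + 1) / M (a + b)) := by
          apply mul_le_mul (ih a ha) hg (div_nonneg (hMpos _).le h1.le)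
          exact mul_nonneg (hMpos 1).le (hMpos _).le
      _ = M 1 * M (a + (b + 1)) := by rw [hab, mul_assoc, e2]

lemma M_single_pow (hMpos : ∀ k, 0 < M k)
    (hlc : ∀ k : ℕ, 1 ≤ k → (M k) ^ 2 ≤ M (k - 1) * M (k + 1))
    (d : ℕ) (hd : 1 ≤ d) :
    ∀ j c, 1 ≤ c → M c * M d ^ j ≤ M 1 ^ j * M (c + j * (d - 1)) := by
  intro j
  induction j with
  | zero => intro c _; simp
  | succ j ih =>
    intro c hc
    obtain ⟨e, rfl⟩ : ∃ e, d = e + 1 := ⟨d - 1, by omega⟩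
    have step : M (c + j * e) * M (e + 1) ≤ M 1 * M (c + j * e + e) :=
      M_two_factor hMpos hlc e (c + j * e) (by omega)
    calc M c * M (e + 1) ^ (j + 1) = (M c * M (e + 1) ^ j) * M (e + 1) := by ring
      _ ≤ (M 1 ^ j * M (c + j * (e + 1 - 1))) * M (e + 1) := by
          apply mul_le_mul_of_nonneg_right (ih c hc) (hMpos _).le
      _ = M 1 ^ j * (M (c + j * e) * M (e + 1)) := by
          simp only [Nat.add_sub_cancel]; ring
      _ ≤ M 1 ^ j * (M 1 * M (c + j * e + e)) := by
          apply mul_le_mul_of_nonneg_left step (pow_nonneg (hMpos 1).le _)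
      _ = M 1 ^ (j + 1) * M (c + (j + 1) * (e + 1 - 1)) := by
          have : c + (j + 1) * (e + 1 - 1) = c + j * e + e := by
            simp only [Nat.add_sub_cancel]; ring
          rw [this]; ring

lemma keyprod (hMpos : ∀ k, 0 < M k)
    (hlc : ∀ k : ℕ, 1 ≤ k → (M k) ^ 2 ≤ M (k - 1) * M (k + 1))
    {X : Type*} [DecidableEq X] (T : Finset X) (d j : X → ℕ)
    (hd : ∀ x ∈ T, 1 ≤ d x) :
    ∀ c, 1 ≤ c →
      M c * ∏ x ∈ T, M (d x) ^ j x ≤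
        M 1 ^ (∑ x ∈ T, j x) * M (c + ∑ x ∈ T, j x * (d x - 1)) := by
  induction T using Finset.induction with
  | empty => intro c _; simp
  | @insert a s ha ih =>
    intro c hc
    have hda : 1 ≤ d a := hd a (Finset.mem_insert_self a s)
    have hds : ∀ x ∈ s, 1 ≤ d x := fun x hx => hd x (Finset.mem_insert_of_mem hx)
    rw [Finset.prod_insert ha, Finset.sum_insert ha, Finset.sum_insert ha]
    have hci : 1 ≤ c + ∑ x ∈ s, j x * (d x - 1) := by omega
    calc M c * (M (d a) ^ j a * ∏ x ∈ s, M (d x) ^ j x)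
        = (M c * ∏ x ∈ s, M (d x) ^ j x) * M (d a) ^ j a := by ring
      _ ≤ (M 1 ^ (∑ x ∈ s, j x) * M (c + ∑ x ∈ s, j x * (d x - 1))) * M (d a) ^ j a := by
          apply mul_le_mul_of_nonneg_right (ih hds c hc)
          exact pow_nonneg (hMpos _).le _
      _ = M 1 ^ (∑ x ∈ s, j x) *
            (M (c + ∑ x ∈ s, j x * (d x - 1)) * M (d a) ^ j a) := by ring
      _ ≤ M 1 ^ (∑ x ∈ s, j x) *
            (M 1 ^ j a * M (c + ∑ x ∈ s, j x * (d x - 1) + j a * (d a - 1))) := by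
          apply mul_le_mul_of_nonneg_left
            (M_single_pow hMpos hlc (d a) hda (j a) _ hci)
            (pow_nonneg (hMpos 1).le _)
      _ = M 1 ^ (j a + ∑ x ∈ s, j x) *
            M (c + (j a * (d a - 1) + ∑ x ∈ s, j x * (d x - 1))) := by
          rw [pow_add]
          have : c + ∑ x ∈ s, j x * (d x - 1) + j a * (d a - 1)
              = c + (j a * (d a - 1) + ∑ x ∈ s, j x * (d x - 1)) := by ring
          rw [this]; ring

end helpers

lemma msize_pos {d : ℕ} {α : Fin d → ℕ} (h : α ≠ 0) : 1 ≤ msize α := by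
  rw [Nat.one_le_iff_ne_zero]
  intro h0
  apply h
  funext i
  have := (Finset.sum_eq_zero_iff.mp h0) i (Finset.mem_univ i)
  simpa using this

lemma msize_finsum {d : ℕ} {X : Type*} (T : Finset X) (f : X → Fin d → ℕ) :
    msize (∑ x ∈ T, f x) = ∑ x ∈ T, msize (f x) := by
  unfold msize
  rw [Finset.sum_comm]
  congr 1
  funext i
  exact Finset.sum_apply i T f

lemma msize_smul {d : ℕ} (c : ℕ) (α : Fin d → ℕ) : msize (c • α) = c * msize α := by
  unfold msize
  rw [Finset.mul_sum]
  congr 1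

lemma sum_r_pow_le {n : ℕ} (r : ℝ) (hr0 : 0 ≤ r) (hr1 : r < 1)
    (D : Finset (Fin n → ℕ)) (hD0 : (0 : Fin n → ℕ) ∉ D) :
    ∑ δ ∈ D, r ^ msize δ ≤ (1 / (1 - r)) ^ n - 1 := by
  classical
  set L : ℕ := D.sup (fun δ => Finset.univ.sup δ) with hL
  set box : Finset (Fin n → ℕ) := Fintype.piFinset (fun _ => Finset.range (L + 1)) with hbox
  have hsub : D ⊆ box.erase 0 := by
    intro δ hδ
    refine Finset.mem_erase.mpr ⟨fun h => hD0 (h ▸ hδ), ?_⟩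
    rw [Fintype.mem_piFinset]
    intro i
    rw [Finset.mem_range]
    have h1 : δ i ≤ Finset.univ.sup δ := Finset.le_sup (Finset.mem_univ i)
    have h2 : Finset.univ.sup δ ≤ L := Finset.le_sup (f := fun δ => Finset.univ.sup δ) hδ
    omega
  have h0box : (0 : Fin n → ℕ) ∈ box := by
    rw [Fintype.mem_piFinset]; intro i; simp
  have hbox_sum : ∑ δ ∈ box, r ^ msize δ = (∑ a ∈ Finset.range (L + 1), r ^ a) ^ n := by
    have : ∀ δ : Fin n → ℕ, r ^ msize δ = ∏ i, r ^ δ i := by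
      intro δ; rw [Finset.prod_pow_eq_pow_sum]; rfl
    rw [Finset.sum_congr rfl (fun δ _ => this δ), ← Finset.prod_univ_sum]
    simp
  have hgeom : ∑ a ∈ Finset.range (L + 1), r ^ a ≤ 1 / (1 - r) := by
    have := geom_sum_Ico_le_of_lt_one hr0 hr1 (m := 0) (n := L + 1)
    simpa [← Finset.range_eq_Ico] using this
  calc ∑ δ ∈ D, r ^ msize δ ≤ ∑ δ ∈ box.erase 0, r ^ msize δ := by
        apply Finset.sum_le_sum_of_subset_of_nonneg hsub
        intro i _ _; positivity
    _ = (∑ δ ∈ box, r ^ msize δ) - r ^ msize (0 : Fin n → ℕ) :=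
        Finset.sum_erase_eq_sub h0box
    _ ≤ (1 / (1 - r)) ^ n - 1 := by
        have hm0 : msize (0 : Fin n → ℕ) = 0 := by simp [msize]
        rw [hm0, pow_zero, hbox_sum]
        have hnn : 0 ≤ ∑ a ∈ Finset.range (L + 1), r ^ a := by positivity
        have := pow_le_pow_left₀ hnn hgeom n
        linarith

/-- the Faà di Bruno coefficient estimate for a log-convex weight sequence.
The sum over all admissible finitely supported `k : (ℕⁿ \ {0}) → ℕᵐ` with
`Σ_δ |k(δ)|·δ = γ` is formalized as: all finite partial sums (over finsets of such `k`,
encoded as finitely supported functions vanishing at `0`) are bounded by `B·C^{|γ|}·M_{|γ|}`. -/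
theorem statement_2 (M : ℕ → ℝ) (hMpos : ∀ k, 0 < M k) (hM0 : M 0 = 1) (hM01 : 1 ≤ M 1)
    (hlc : ∀ k : ℕ, 1 ≤ k → (M k) ^ 2 ≤ M (k - 1) * M (k + 1))
    (A : ℝ) (hA : 0 < A) (m n : ℕ) (hm : 1 ≤ m) (hn : 1 ≤ n) :
    ∃ B C : ℝ, 0 < B ∧ 0 < C ∧
      ∀ γ : Fin n → ℕ, γ ≠ 0 →
        ∀ S : Finset ((Fin n → ℕ) →₀ (Fin m → ℕ)),
          (∀ k ∈ S, k 0 = 0 ∧ ∑ δ ∈ k.support, msize (k δ) • δ = γ) →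
          ∑ k ∈ S,
              ((mfact (∑ δ ∈ k.support, k δ) : ℝ) / ∏ δ ∈ k.support, (mfact (k δ) : ℝ)) *
                A ^ msize (∑ δ ∈ k.support, k δ) * M (msize (∑ δ ∈ k.support, k δ)) *
                ∏ δ ∈ k.support, M (msize δ) ^ msize (k δ)
            ≤ B * C ^ msize γ * M (msize γ) := by
  classical
  have hnR : (1 : ℝ) ≤ (n : ℝ) := by exact_mod_cast hn
  have hmR : (1 : ℝ) ≤ (m : ℝ) := by exact_mod_cast hm
  set r : ℝ := ((n : ℝ) * (2 * m + 1))⁻¹ with hrdef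
  have hden : (3 : ℝ) ≤ (n : ℝ) * (2 * m + 1) := by nlinarith
  have hrpos : 0 < r := by rw [hrdef]; positivity
  have hr3 : r ≤ 1 / 3 := by
    rw [hrdef]
    rw [inv_le_comm₀ (by linarith) (by norm_num)]
    linarith
  have hr1 : r < 1 := by linarith
  have h1r : 0 < 1 - r := by linarith
  -- Bernoulli estimate
  have hnr : (n : ℝ) * r = (2 * (m : ℝ) + 1)⁻¹ := by
    rw [hrdef]
    field_simp
  have hb : (1 : ℝ) - (n : ℝ) * r ≤ (1 - r) ^ n := by
    have h := one_add_mul_le_pow (a := -r) (by linarith) n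
    calc (1 : ℝ) - (n : ℝ) * r = 1 + (n : ℝ) * (-r) := by ring
      _ ≤ (1 + -r) ^ n := h
      _ = (1 - r) ^ n := by rw [show (1 : ℝ) + -r = 1 - r by ring]
  have hlb : (0 : ℝ) < 1 - (n : ℝ) * r := by
    rw [hnr]
    have h1 : (2 * (m : ℝ) + 1)⁻¹ < 1 := by
      rw [inv_lt_one_iff₀]
      right; linarith
    linarith
  have hq : (1 / (1 - r)) ^ n - 1 ≤ 1 / (2 * (m : ℝ)) := by
    have hid : (1 + 1 / (2 * (m : ℝ))) * (1 - (n : ℝ) * r) = 1 := by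
      rw [hnr]
      field_simp
      ring
    have hpows : (0 : ℝ) < (1 - r) ^ n := by positivity
    have h2 : (1 / (1 - r)) ^ n ≤ 1 + 1 / (2 * (m : ℝ)) := by
      rw [div_pow, one_pow, div_le_iff₀ hpows]
      calc (1 : ℝ) = (1 + 1 / (2 * (m : ℝ))) * (1 - (n : ℝ) * r) := hid.symm
        _ ≤ (1 + 1 / (2 * (m : ℝ))) * (1 - r) ^ n := by
            apply mul_le_mul_of_nonneg_left hb
            positivity
    linarith
  set Em : ℝ := max 1 A * M 1 with hEmdef
  have hmax1 : (1 : ℝ) ≤ max 1 A := le_max_left 1 A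
  have hEm1 : (1 : ℝ) ≤ Em := by
    rw [hEmdef]; nlinarith
  refine ⟨2, Em / r, by norm_num, by positivity, ?_⟩
  intro γ hγ S hS
  set G := msize γ with hGdef
  have hG1 : 1 ≤ G := msize_pos hγ
  set D : Finset (Fin n → ℕ) := S.biUnion Finsupp.support with hDdef
  have hD0 : (0 : Fin n → ℕ) ∉ D := by
    intro h
    obtain ⟨k, hk, h0⟩ := Finset.mem_biUnion.mp h
    exact (Finsupp.mem_support_iff.mp h0) ((hS k hk).1)
  have hsupp : ∀ k ∈ S, k.support ⊆ D := by
    intro k hk δ hδ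
    exact Finset.mem_biUnion.mpr ⟨k, hk, hδ⟩
  have hδne : ∀ k ∈ S, ∀ δ ∈ k.support, 1 ≤ msize δ := by
    intro k hk δ hδ
    refine msize_pos (fun h => hD0 ?_)
    exact h ▸ (hsupp k hk hδ)
  -- per k : the weighted size identity
  have hGk : ∀ k ∈ S, ∑ δ ∈ k.support, msize (k δ) * msize δ = G := by
    intro k hk
    rw [hGdef, ← (hS k hk).2, msize_finsum]
    exact Finset.sum_congr rfl (fun δ _ => (msize_smul _ _).symm)
  have hNleG : ∀ k ∈ S, ∑ δ ∈ k.support, msize (k δ) ≤ G := by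
    intro k hk
    rw [← hGk k hk]
    apply Finset.sum_le_sum
    intro δ hδ
    exact Nat.le_mul_of_pos_right _ (hδne k hk δ hδ)
  have hN1 : ∀ k ∈ S, 1 ≤ ∑ δ ∈ k.support, msize (k δ) := by
    intro k hk
    rw [Nat.one_le_iff_ne_zero]
    intro h0
    have hz : ∀ δ ∈ k.support, msize (k δ) = 0 := Finset.sum_eq_zero_iff.mp h0
    have : G = 0 := by
      rw [← hGk k hk]
      apply Finset.sum_eq_zero
      intro δ hδ
      rw [hz δ hδ, zero_mul]
    omega
  have hNk : ∀ k : (Fin n → ℕ) →₀ (Fin m → ℕ),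
      msize (∑ δ ∈ k.support, k δ) = ∑ δ ∈ k.support, msize (k δ) :=
    fun k => msize_finsum _ _
  -- STEP 1 : termwise bound
  have step1 : ∀ k ∈ S,
      ((mfact (∑ δ ∈ k.support, k δ) : ℝ) / ∏ δ ∈ k.support, (mfact (k δ) : ℝ)) *
          A ^ msize (∑ δ ∈ k.support, k δ) * M (msize (∑ δ ∈ k.support, k δ)) *
          ∏ δ ∈ k.support, M (msize δ) ^ msize (k δ)
        ≤ ((mfact (∑ δ ∈ k.support, k δ) : ℝ) / ∏ δ ∈ k.support, (mfact (k δ) : ℝ)) *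
            (Em ^ G * M G) := by
    intro k hk
    set N := ∑ δ ∈ k.support, msize (k δ) with hNdef
    have hprod := keyprod hMpos hlc k.support (fun δ => msize δ) (fun δ => msize (k δ))
      (hδne k hk) N (hN1 k hk)
    have hidx : N + ∑ δ ∈ k.support, msize (k δ) * (msize δ - 1) = G := by
      rw [← hGk k hk, hNdef, ← Finset.sum_add_distrib]
      apply Finset.sum_congr rfl
      intro δ hδ
      obtain ⟨e, he⟩ : ∃ e, msize δ = e + 1 := ⟨msize δ - 1, by have := hδne k hk δ hδ; omega⟩
      rw [he]
      simp only [Nat.add_sub_cancel]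
      ring
    rw [hidx] at hprod
    have hcoeffnn : (0 : ℝ) ≤
        (mfact (∑ δ ∈ k.support, k δ) : ℝ) / ∏ δ ∈ k.support, (mfact (k δ) : ℝ) := by
      apply div_nonneg (by positivity)
      apply Finset.prod_nonneg
      intro δ _; positivity
    have hAle : A ^ N ≤ (max 1 A) ^ G := by
      calc A ^ N ≤ (max 1 A) ^ N := pow_le_pow_left₀ hA.le (le_max_right 1 A) N
        _ ≤ (max 1 A) ^ G := pow_le_pow_right₀ hmax1 (hNleG k hk)
    have hM1le : M 1 ^ N ≤ M 1 ^ G := pow_le_pow_right₀ hM01 (hNleG k hk)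
    rw [hNk k]
    calc ((mfact (∑ δ ∈ k.support, k δ) : ℝ) / ∏ δ ∈ k.support, (mfact (k δ) : ℝ)) *
          A ^ N * M N * ∏ δ ∈ k.support, M (msize δ) ^ msize (k δ)
        = ((mfact (∑ δ ∈ k.support, k δ) : ℝ) / ∏ δ ∈ k.support, (mfact (k δ) : ℝ)) *
            (A ^ N * (M N * ∏ δ ∈ k.support, M (msize δ) ^ msize (k δ))) := by ring
      _ ≤ ((mfact (∑ δ ∈ k.support, k δ) : ℝ) / ∏ δ ∈ k.support, (mfact (k δ) : ℝ)) *
            (A ^ N * (M 1 ^ N * M G)) := by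
          apply mul_le_mul_of_nonneg_left _ hcoeffnn
          apply mul_le_mul_of_nonneg_left hprod (pow_nonneg hA.le N)
      _ ≤ ((mfact (∑ δ ∈ k.support, k δ) : ℝ) / ∏ δ ∈ k.support, (mfact (k δ) : ℝ)) *
            ((max 1 A) ^ G * (M 1 ^ G * M G)) := by
          apply mul_le_mul_of_nonneg_left _ hcoeffnn
          have h1 : A ^ N * (M 1 ^ N * M G) ≤ (max 1 A) ^ G * (M 1 ^ N * M G) := by
            apply mul_le_mul_of_nonneg_right hAle
            exact mul_nonneg (pow_nonneg (hMpos 1).le _) (hMpos G).le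
          have h2 : (max 1 A) ^ G * (M 1 ^ N * M G) ≤ (max 1 A) ^ G * (M 1 ^ G * M G) := by
            apply mul_le_mul_of_nonneg_left _ (by positivity)
            exact mul_le_mul_of_nonneg_right hM1le (hMpos G).le
          linarith
      _ = ((mfact (∑ δ ∈ k.support, k δ) : ℝ) / ∏ δ ∈ k.support, (mfact (k δ) : ℝ)) *
            (Em ^ G * M G) := by
          rw [hEmdef, mul_pow]; ring
  -- STEP 2 : combinatorial bound
  set E : Finset ((Fin n → ℕ) × Fin m) := D ×ˢ Finset.univ with hEdef
  set t : ((Fin n → ℕ) × Fin m) → ℝ := fun p => r ^ msize p.1 with htdef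
  have hsumt : ∑ p ∈ E, t p ≤ 1 / 2 := by
    rw [hEdef, Finset.sum_product]
    have : ∀ δ ∈ D, (∑ _i : Fin m, t (δ, _i)) = (m : ℝ) * r ^ msize δ := by
      intro δ _
      simp [htdef, Finset.card_univ]
    rw [Finset.sum_congr rfl this, ← Finset.mul_sum]
    have hD := sum_r_pow_le r hrpos.le hr1 D hD0
    calc (m : ℝ) * ∑ δ ∈ D, r ^ msize δ ≤ (m : ℝ) * ((1 / (1 - r)) ^ n - 1) := by
          apply mul_le_mul_of_nonneg_left hD (by positivity)
      _ ≤ (m : ℝ) * (1 / (2 * (m : ℝ))) := by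
          apply mul_le_mul_of_nonneg_left hq (by positivity)
      _ = 1 / 2 := by field_simp
  have htnn : ∀ p, 0 ≤ t p := fun p => by rw [htdef]; positivity
  have hEtnn : (0 : ℝ) ≤ ∑ p ∈ E, t p := Finset.sum_nonneg (fun p _ => htnn p)
  set φ : ((Fin n → ℕ) →₀ (Fin m → ℕ)) → ((Fin n → ℕ) × Fin m) → ℕ :=
    fun k p => k p.1 p.2 with hφdef
  -- sum of φ k over E
  have hsumφ : ∀ k ∈ S, ∑ p ∈ E, φ k p = ∑ δ ∈ k.support, msize (k δ) := by
    intro k hk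
    rw [hEdef, Finset.sum_product]
    refine (Finset.sum_subset (hsupp k hk) ?_).symm
    intro δ _ hδ
    have : k δ = 0 := Finsupp.notMem_support_iff.mp hδ
    simp [hφdef, this]
  -- product of factorials over E
  have hprodfact : ∀ k ∈ S, ∏ p ∈ E, (φ k p).factorial = ∏ δ ∈ k.support, mfact (k δ) := by
    intro k hk
    rw [hEdef, Finset.prod_product]
    refine (Finset.prod_subset (hsupp k hk) ?_).symm
    intro δ _ hδ
    have : k δ = 0 := Finsupp.notMem_support_iff.mp hδ
    simp [hφdef, this, mfact]
  -- weight product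
  have hprodt : ∀ k ∈ S, ∏ p ∈ E, t p ^ φ k p = r ^ G := by
    intro k hk
    have h1 : ∀ p ∈ E, t p ^ φ k p = r ^ (msize p.1 * φ k p) := by
      intro p _; rw [htdef, pow_mul]
    rw [Finset.prod_congr rfl h1, Finset.prod_pow_eq_pow_sum]
    congr 1
    rw [hEdef, Finset.sum_product]
    have h2 : ∀ δ ∈ D, (∑ i : Fin m, msize δ * φ k (δ, i)) = msize (k δ) * msize δ := by
      intro δ _
      rw [← Finset.mul_sum]
      rw [show (∑ i : Fin m, φ k (δ, i)) = msize (k δ) from rfl]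
      ring
    rw [Finset.sum_congr rfl h2]
    rw [← hGk k hk]
    refine (Finset.sum_subset (hsupp k hk) ?_).symm
    intro δ _ hδ
    have : k δ = 0 := Finsupp.notMem_support_iff.mp hδ
    simp [this, msize]
  -- termwise multinomial bound
  have hF : ∀ k ∈ S,
      ((mfact (∑ δ ∈ k.support, k δ) : ℝ) / ∏ δ ∈ k.support, (mfact (k δ) : ℝ)) * r ^ G
        ≤ (Nat.multinomial E (φ k) : ℝ) * ∏ p ∈ E, t p ^ φ k p := by
    intro k hk
    set N := ∑ δ ∈ k.support, msize (k δ) with hNdef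
    have hMS := Nat.multinomial_spec E (φ k)
    rw [hsumφ k hk, hprodfact k hk] at hMS
    have hPpos : (0 : ℝ) < ∏ δ ∈ k.support, (mfact (k δ) : ℝ) := by
      apply Finset.prod_pos
      intro δ _
      exact_mod_cast Nat.pos_of_ne_zero (fun h => by
        have := Finset.prod_pos (f := fun i => Nat.factorial (k δ i))
          (s := Finset.univ) (fun i _ => Nat.factorial_pos _)
        rw [show (∏ i, Nat.factorial (k δ i)) = mfact (k δ) from rfl, h] at this
        omega)
    have hcast : (∏ δ ∈ k.support, (mfact (k δ) : ℝ)) * (Nat.multinomial E (φ k) : ℝ)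
        = (Nat.factorial N : ℝ) := by
      exact_mod_cast congrArg (Nat.cast : ℕ → ℝ) hMS
    have hmult : (Nat.multinomial E (φ k) : ℝ)
        = (Nat.factorial N : ℝ) / ∏ δ ∈ k.support, (mfact (k δ) : ℝ) := by
      field_simp
      linarith [hcast]
    have hfle : (mfact (∑ δ ∈ k.support, k δ) : ℝ) ≤ (Nat.factorial N : ℝ) := by
      have hdvd := Nat.prod_factorial_dvd_factorial_sum Finset.univ (∑ δ ∈ k.support, k δ)
      have : mfact (∑ δ ∈ k.support, k δ) ≤ Nat.factorial (msize (∑ δ ∈ k.support, k δ)) :=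
        Nat.le_of_dvd (Nat.factorial_pos _) hdvd
      rw [hNk k] at this
      exact_mod_cast this
    rw [hprodt k hk, hmult]
    exact mul_le_mul_of_nonneg_right ((div_le_div_iff_of_pos_right hPpos).mpr hfle) (by positivity)
  -- injectivity of φ on S
  have hφinj : ∀ x ∈ S, ∀ y ∈ S, φ x = φ y → x = y := by
    intro x _ y _ h
    apply Finsupp.ext
    intro δ
    funext i
    exact congrFun h (δ, i)
  have hmem : ∀ k ∈ S, φ k ∈ (Finset.range (G + 1)).biUnion
      (fun N => Finset.piAntidiag E N) := by
    intro k hk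
    apply Finset.mem_biUnion.mpr
    refine ⟨∑ δ ∈ k.support, msize (k δ),
      Finset.mem_range.mpr (by have := hNleG k hk; omega), ?_⟩
    rw [Finset.mem_piAntidiag]
    refine ⟨hsumφ k hk, ?_⟩
    intro p hp
    have hk1 : k p.1 ≠ 0 := by
      intro h0
      apply hp
      show k p.1 p.2 = 0
      rw [h0]
      rfl
    have hp1 : p.1 ∈ k.support := Finsupp.mem_support_iff.mpr hk1
    rw [hEdef]
    exact Finset.mem_product.mpr ⟨hsupp k hk hp1, Finset.mem_univ _⟩
  have hdisj : (↑(Finset.range (G + 1)) : Set ℕ).PairwiseDisjoint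
      (fun N => Finset.piAntidiag E N) := by
    intro a _ b _ hab
    simp only [Function.onFun]
    rw [Finset.disjoint_left]
    intro g hga hgb
    rw [Finset.mem_piAntidiag] at hga hgb
    exact hab (by rw [← hga.1, hgb.1])
  have hgeo : ∑ N ∈ Finset.range (G + 1), (1 / 2 : ℝ) ^ N ≤ 2 := by
    have h := geom_sum_Ico_le_of_lt_one (by norm_num : (0:ℝ) ≤ 1/2)
      (by norm_num : (1/2 : ℝ) < 1) (m := 0) (n := G + 1)
    rw [← Finset.range_eq_Ico] at h
    norm_num at h
    linarith
  have step2 : ∑ k ∈ S, ((mfact (∑ δ ∈ k.support, k δ) : ℝ) /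
      ∏ δ ∈ k.support, (mfact (k δ) : ℝ)) ≤ 2 * r⁻¹ ^ G := by
    have hchain : (∑ k ∈ S, ((mfact (∑ δ ∈ k.support, k δ) : ℝ) /
        ∏ δ ∈ k.support, (mfact (k δ) : ℝ))) * r ^ G ≤ 2 := by
      rw [Finset.sum_mul]
      calc ∑ k ∈ S, ((mfact (∑ δ ∈ k.support, k δ) : ℝ) /
              ∏ δ ∈ k.support, (mfact (k δ) : ℝ)) * r ^ G
          ≤ ∑ k ∈ S, (Nat.multinomial E (φ k) : ℝ) * ∏ p ∈ E, t p ^ φ k p :=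
            Finset.sum_le_sum hF
        _ = ∑ g ∈ S.image φ, (Nat.multinomial E g : ℝ) * ∏ p ∈ E, t p ^ g p := by
            rw [Finset.sum_image hφinj]
        _ ≤ ∑ g ∈ (Finset.range (G + 1)).biUnion (fun N => Finset.piAntidiag E N),
              (Nat.multinomial E g : ℝ) * ∏ p ∈ E, t p ^ g p := by
            apply Finset.sum_le_sum_of_subset_of_nonneg
            · intro g hg
              obtain ⟨k, hk, rfl⟩ := Finset.mem_image.mp hg
              exact hmem k hk
            · intro g _ _
              apply mul_nonneg (by positivity)
              exact Finset.prod_nonneg fun p _ => pow_nonneg (htnn p) _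
        _ = ∑ N ∈ Finset.range (G + 1), ∑ g ∈ Finset.piAntidiag E N,
              (Nat.multinomial E g : ℝ) * ∏ p ∈ E, t p ^ g p :=
            Finset.sum_biUnion hdisj
        _ = ∑ N ∈ Finset.range (G + 1), (∑ p ∈ E, t p) ^ N := by
            refine Finset.sum_congr rfl fun N _ => ?_
            exact (Finset.sum_pow_eq_sum_piAntidiag E t N).symm
        _ ≤ ∑ N ∈ Finset.range (G + 1), (1 / 2 : ℝ) ^ N :=
            Finset.sum_le_sum fun N _ => pow_le_pow_left₀ hEtnn hsumt N
        _ ≤ 2 := hgeo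
    have hrG : (0 : ℝ) < r ^ G := by positivity
    rw [show (2 : ℝ) * r⁻¹ ^ G = 2 / r ^ G by rw [inv_pow]; ring]
    rw [le_div_iff₀ hrG]
    exact hchain
  calc ∑ k ∈ S,
        ((mfact (∑ δ ∈ k.support, k δ) : ℝ) / ∏ δ ∈ k.support, (mfact (k δ) : ℝ)) *
          A ^ msize (∑ δ ∈ k.support, k δ) * M (msize (∑ δ ∈ k.support, k δ)) *
          ∏ δ ∈ k.support, M (msize δ) ^ msize (k δ)
      ≤ ∑ k ∈ S, ((mfact (∑ δ ∈ k.support, k δ) : ℝ) /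
          ∏ δ ∈ k.support, (mfact (k δ) : ℝ)) * (Em ^ G * M G) :=
        Finset.sum_le_sum step1
    _ = (∑ k ∈ S, ((mfact (∑ δ ∈ k.support, k δ) : ℝ) /
          ∏ δ ∈ k.support, (mfact (k δ) : ℝ))) * (Em ^ G * M G) :=
        (Finset.sum_mul _ _ _).symm
    _ ≤ (2 * r⁻¹ ^ G) * (Em ^ G * M G) := by
        apply mul_le_mul_of_nonneg_right step2
        exact mul_nonneg (pow_nonneg (le_trans zero_le_one hEm1) _) (hMpos G).le
    _ = 2 * (Em / r) ^ G * M G := by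
        rw [div_eq_mul_inv, mul_pow]
        ring
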